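/- For γ ≥ 1 and τ_d > 1, define f_d(τ_d) := 2h² (3 + (τ_d + 1) h''/h') + (3τ_d - 5)(τ_d + 1) h h' + τ_d(τ_d + 1)(τ_d² - 1)(h')², with h, h', h'' evaluated at τ_d. Then f_d(τ_d) > (1 + τ_d^{-1})(τ_d²(τ_d² - 1)(h')² - 2h) for all τ_d > 1, and consequently f_d(τ_d) > 0 for all τ_d > 1. -/

import Mathlib

/-- Polytropic enthalpy: `h(τ) = (τ^(γ-1) - 1)/(γ-1)` for `γ > 1`, `log τ` for `γ = 1`. -/
noncomputable def enthalpy (γ τ : ℝ) : ℝ :=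
  if γ = 1 then Real.log τ else (τ ^ (γ - 1) - 1) / (γ - 1)

/-- `f_d(τ) = 2h²(3 + (τ+1)h''/h') + (3τ-5)(τ+1)h h' + τ(τ+1)(τ²-1)(h')²`,
with `h' = τ^(γ-2)` and `h'' = (γ-2)τ^(γ-3)` evaluated at `τ`. -/
noncomputable def fD (γ τ : ℝ) : ℝ :=
  2 * (enthalpy γ τ) ^ 2 * (3 + (τ + 1) * ((γ - 2) * τ ^ (γ - 3)) / τ ^ (γ - 2)) +
    (3 * τ - 5) * (τ + 1) * enthalpy γ τ * τ ^ (γ - 2) +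
    τ * (τ + 1) * (τ ^ 2 - 1) * (τ ^ (γ - 2)) ^ 2

set_option maxHeartbeats 1000000 in
/-- For `γ ≥ 1` and `τ > 1`:
`f_d(τ) > (1 + τ⁻¹)(τ²(τ²-1)(h')² - 2h)`, and consequently `f_d(τ) > 0`. -/
theorem fD_pos (γ : ℝ) (hγ : 1 ≤ γ) :
    ∀ τ : ℝ, 1 < τ →
      (1 + τ⁻¹) * (τ ^ 2 * (τ ^ 2 - 1) * (τ ^ (γ - 2)) ^ 2 - 2 * enthalpy γ τ) < fD γ τ ∧
      0 < fD γ τ := by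
  intro τ hτ
  have ht0 : (0:ℝ) < τ := by linarith
  set e := enthalpy γ τ with he
  set A := τ ^ (γ - 1) with hAdef
  have hA1 : 1 ≤ A := Real.one_le_rpow hτ.le (by linarith)
  have h2 : τ ^ (γ - 2) = A / τ := by
    rw [hAdef, show γ - 2 = (γ - 1) - 1 by ring, Real.rpow_sub ht0, Real.rpow_one]
  have h3 : τ ^ (γ - 3) = A / τ ^ 2 := by
    rw [hAdef, show γ - 3 = (γ - 1) - 2 by ring, Real.rpow_sub ht0,
      show (2:ℝ) = ((2:ℕ):ℝ) by norm_num, Real.rpow_natCast]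
  have key : A = (γ - 1) * e + 1 := by
    rcases eq_or_lt_of_le hγ with hγ1 | hγ1
    · simp [he, enthalpy, ← hγ1, hAdef]
    · have hg : γ - 1 ≠ 0 := by linarith
      rw [he, enthalpy, if_neg (by intro h; exact hg (by rw [h]; ring))]
      field_simp
      linarith [hAdef]
  have hγ0 : 0 ≤ γ - 1 := by linarith
  have hepos : 0 < e := by
    rcases eq_or_lt_of_le hγ with hγ1 | hγ1
    · rw [he, enthalpy, if_pos hγ1.symm]
      exact Real.log_pos hτ
    · have hAgt : 1 < A := Real.one_lt_rpow_iff_of_pos ht0 |>.2 (Or.inl ⟨hτ, by linarith⟩)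
      rw [he, enthalpy, if_neg (by intro h; rw [h] at hγ1; exact lt_irrefl 1 hγ1)]
      rw [← hAdef]
      exact div_pos (by linarith) (by linarith)
  have hApos : 0 < A := by linarith
  have htne : τ ≠ 0 := ne_of_gt ht0
  have hAne : A ≠ 0 := ne_of_gt hApos
  -- the log-type inequality: 2e ≤ (τ²-1)A²
  have hlog2 : 2 * Real.log τ ≤ τ ^ 2 - 1 := by
    have := Real.log_le_sub_one_of_pos (show (0:ℝ) < τ ^ 2 by positivity)
    rwa [Real.log_pow, Nat.cast_ofNat] at this
  have hbound : 2 * e ≤ (τ ^ 2 - 1) * A ^ 2 := by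
    rcases eq_or_lt_of_le hγ with hγ1 | hγ1
    · have hA : A = 1 := by rw [hAdef, ← hγ1]; simp
      rw [he, enthalpy, if_pos hγ1.symm, hA]
      nlinarith
    · have hg : 0 < γ - 1 := by linarith
      have hlogA : Real.log A = (γ - 1) * Real.log τ := by
        rw [hAdef, Real.log_rpow ht0]
      have hinv : Real.log A⁻¹ ≤ A⁻¹ - 1 :=
        Real.log_le_sub_one_of_pos (by positivity)
      rw [Real.log_inv] at hinv
      -- A - 1 ≤ A * log A
      have s1 : A - 1 ≤ A * Real.log A := by
        have h1 : 1 - A⁻¹ ≤ Real.log A := by linarith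
        have := mul_le_mul_of_nonneg_left h1 hApos.le
        have hAA : A * A⁻¹ = 1 := mul_inv_cancel₀ hAne
        nlinarith
      have hge : e * (γ - 1) = A - 1 := by
        rw [he, enthalpy, if_neg (by intro h; rw [h] at hγ1; exact lt_irrefl 1 hγ1),
          ← hAdef]
        field_simp
      have hlt : 0 < Real.log τ := Real.log_pos hτ
      -- 2(A-1) ≤ 2(γ-1) A log τ ≤ (γ-1) A (τ²-1) ≤ (γ-1)(τ²-1)A²
      have c1 : 2 * (A - 1) ≤ 2 * (γ - 1) * (A * Real.log τ) := by
        rw [hlogA] at s1; nlinarith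
      have c2 : 2 * (A * Real.log τ) ≤ A * (τ ^ 2 - 1) :=
        by nlinarith
      have c3 : A * (τ ^ 2 - 1) ≤ A ^ 2 * (τ ^ 2 - 1) := by
        nlinarith [mul_nonneg (mul_nonneg hApos.le (by linarith : (0:ℝ) ≤ A - 1)) (by nlinarith : (0:ℝ) ≤ τ ^ 2 - 1)]
      nlinarith [mul_le_mul_of_nonneg_left c2 hg.le, mul_le_mul_of_nonneg_left c3 hg.le]
  -- the main identity
  have keyid : fD γ τ -
      (1 + τ⁻¹) * (τ ^ 2 * (τ ^ 2 - 1) * (τ ^ (γ - 2)) ^ 2 - 2 * e) =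
      e * (e * (3 * (γ - 1) * τ ^ 2 + 4 * τ - 3 * (γ - 1) - 2) + 3 * (τ ^ 2 - 1)) / τ := by
    rw [fD, ← he, h2, h3, key]
    have hAne' : (γ - 1) * e + 1 ≠ 0 := by rw [← key]; exact hAne
    field_simp
    ring
  have hcoef : 0 < 3 * (γ - 1) * τ ^ 2 + 4 * τ - 3 * (γ - 1) - 2 := by nlinarith
  have hdiffpos : 0 <
      e * (e * (3 * (γ - 1) * τ ^ 2 + 4 * τ - 3 * (γ - 1) - 2) + 3 * (τ ^ 2 - 1)) / τ := by
    apply div_pos _ ht0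
    apply mul_pos hepos
    nlinarith
  have main : (1 + τ⁻¹) * (τ ^ 2 * (τ ^ 2 - 1) * (τ ^ (γ - 2)) ^ 2 - 2 * e) < fD γ τ := by
    linarith [keyid ▸ hdiffpos]
  refine ⟨main, lt_of_le_of_lt ?_ main⟩
  have hinner : 0 ≤ τ ^ 2 * (τ ^ 2 - 1) * (τ ^ (γ - 2)) ^ 2 - 2 * e := by
    rw [h2]
    have : τ ^ 2 * (τ ^ 2 - 1) * (A / τ) ^ 2 = (τ ^ 2 - 1) * A ^ 2 := by
      field_simp
    rw [this]; linarith
  have : 0 < 1 + τ⁻¹ := by positivity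
  positivity
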